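/- Let ψ : ℝ² → ℝ be twice continuously differentiable with compact support, and define Q_ψ(η₁,η₂) := (∫_{ℝ²} |∂₁∂₂ψ(t,y)|² · |∫_0^y (∫_0^z e^{iη₁w} dw) e^{iη₂z} dz|² dt dy)^{1/2} for η₁, η₂ ∈ ℝ. Then for all λ₁, λ₂ ∈ (0,2) with λ₁ + λ₂ > 1: (i) the integral ∫_{ℝ²} |Q_ψ(x₁,x₂)|² |x₁|^{1−λ₁} |x₂|^{1−λ₂} dx₁ dx₂ is finite; (ii) there exist ε > 0 and C > 0 such that for every c ≥ 1 and each i ∈ {1,2}, ∫_{|x_i| ≥ c} |Q_ψ(x₁,x₂)|² |x₁|^{1−λ₁} |x₂|^{1−λ₂} dx₁ dx₂ ≤ C c^{−ε}. -/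

import Mathlib

noncomputable section
open MeasureTheory Set Real


lemma oneD_integrable {a b : ℝ} (ha : -1 < a) (hb : b < -1) :
    Integrable (fun t : ℝ => min (|t| ^ a) (|t| ^ b)) := by
  have hmeas : Measurable (fun t : ℝ => min (|t| ^ a) (|t| ^ b)) :=
    by fun_prop
  have hnonneg : ∀ t : ℝ, 0 ≤ min (|t| ^ a) (|t| ^ b) := fun t =>
    le_min (Real.rpow_nonneg (abs_nonneg t) a) (Real.rpow_nonneg (abs_nonneg t) b)
  have hIoc : IntegrableOn (fun t : ℝ => min (|t| ^ a) (|t| ^ b)) (Ioc 0 1) := by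
    have h1 : IntegrableOn (fun t : ℝ => t ^ a) (Ioc (0:ℝ) 1) := by
      have := intervalIntegral.intervalIntegrable_rpow' (a := 0) (b := 1) ha
      rwa [intervalIntegrable_iff, uIoc_of_le zero_le_one] at this
    refine Integrable.mono h1 hmeas.aestronglyMeasurable ?_
    filter_upwards [ae_restrict_mem measurableSet_Ioc] with t ht
    rw [Real.norm_eq_abs, Real.norm_eq_abs, abs_of_nonneg (hnonneg t),
      abs_of_nonneg (Real.rpow_nonneg ht.1.le a)]
    calc min (|t| ^ a) (|t| ^ b) ≤ |t| ^ a := min_le_left _ _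
      _ = t ^ a := by rw [abs_of_pos ht.1]
  have hIoi : IntegrableOn (fun t : ℝ => min (|t| ^ a) (|t| ^ b)) (Ioi 1) := by
    have h1 : IntegrableOn (fun t : ℝ => t ^ b) (Ioi (1:ℝ)) :=
      integrableOn_Ioi_rpow_of_lt hb one_pos
    refine Integrable.mono h1 hmeas.aestronglyMeasurable ?_
    filter_upwards [ae_restrict_mem measurableSet_Ioi] with t ht
    rw [Real.norm_eq_abs, Real.norm_eq_abs, abs_of_nonneg (hnonneg t),
      abs_of_nonneg (Real.rpow_nonneg (lt_trans one_pos ht).le b)]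
    calc min (|t| ^ a) (|t| ^ b) ≤ |t| ^ b := min_le_right _ _
      _ = t ^ b := by rw [abs_of_pos (lt_trans one_pos ht)]
  have hpos : IntegrableOn (fun t : ℝ => min (|t| ^ a) (|t| ^ b)) (Ioi 0) := by
    rw [← Ioc_union_Ioi_eq_Ioi (zero_le_one)]
    exact hIoc.union hIoi
  rw [← integrableOn_univ, ← @Iio_union_Ici _ _ (0 : ℝ), integrableOn_union,
    integrableOn_Ici_iff_integrableOn_Ioi]
  refine ⟨?_, hpos⟩
  rw [← (Measure.measurePreserving_neg (volume : Measure ℝ)).integrableOn_comp_preimage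
      (Homeomorph.neg ℝ).measurableEmbedding]
  simp only [Function.comp_def, abs_neg, neg_preimage, neg_Iio, neg_neg, neg_zero]
  exact hpos


section helpers

lemma rpow_add_le_add_rpow' {x y p : ℝ} (hx : 0 ≤ x) (hy : 0 ≤ y) (hp : 0 ≤ p) (hp1 : p ≤ 1) :
    (x + y) ^ p ≤ x ^ p + y ^ p := by
  lift x to NNReal using hx
  lift y to NNReal using hy
  have := NNReal.rpow_add_le_add_rpow x y hp hp1
  exact_mod_cast this

/-- `m2 t = min 1 |t|⁻²`. -/
def m2 (t : ℝ) : ℝ := min 1 (|t| ^ (-2:ℝ))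

lemma m2_nonneg (t : ℝ) : 0 ≤ m2 t := le_min zero_le_one (rpow_nonneg (abs_nonneg t) _)

lemma m2_le_one (t : ℝ) : m2 t ≤ 1 := min_le_left _ _

lemma m2_zero : m2 0 = 0 := by simp [m2, Real.zero_rpow (by norm_num : (-2:ℝ) ≠ 0)]

/-- `gg e t = m2 t * |t| ^ e`. -/
def gg (e : ℝ) (t : ℝ) : ℝ := m2 t * |t| ^ e

lemma gg_nonneg (e t : ℝ) : 0 ≤ gg e t :=
  mul_nonneg (m2_nonneg t) (rpow_nonneg (abs_nonneg t) _)

lemma gg_zero_eq (t : ℝ) : gg 0 t = m2 t := by simp [gg]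

lemma gg_eq_min {e t : ℝ} (ht : t ≠ 0) : gg e t = min (|t| ^ e) (|t| ^ (e - 2)) := by
  have h : (0:ℝ) < |t| := abs_pos.mpr ht
  have : |t| ^ (-2:ℝ) * |t| ^ e = |t| ^ (e - 2) := by
    rw [← Real.rpow_add h]; ring_nf
  rw [gg, m2, min_mul_of_nonneg _ _ (rpow_nonneg (abs_nonneg t) e), one_mul, this]

lemma gg_measurable (e : ℝ) : Measurable (gg e) := by unfold gg m2; fun_prop

lemma gg_integrable {e : ℝ} (he1 : -1 < e) (he2 : e < 1) : Integrable (gg e) := by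
  refine (oneD_integrable (a := e) (b := e - 2) he1 (by linarith)).congr ?_
  have h0 : ({0} : Set ℝ)ᶜ ∈ ae (volume : Measure ℝ) := by
    rw [compl_mem_ae_iff]; simp
  filter_upwards [h0] with t ht
  exact (gg_eq_min (by simpa using ht)).symm

lemma gg_mul_rpow (e f : ℝ) (t : ℝ) : gg e t * |t| ^ f = gg (e + f) t := by
  rcases eq_or_ne t 0 with rfl | ht
  · simp [gg, m2_zero]
  · have h : (0:ℝ) < |t| := abs_pos.mpr ht
    rw [gg, gg, mul_assoc, ← Real.rpow_add h]

end helpers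
section majorant

/-- The 2D majorant. -/
def Wmaj (μ₁ μ₂ : ℝ) (x : ℝ × ℝ) : ℝ :=
  (m2 x.1 * m2 x.2 + m2 x.1 * m2 (x.1 + x.2)) * (|x.1| ^ (1 - μ₁) * |x.2| ^ (1 - μ₂))

lemma Wmaj_nonneg (μ₁ μ₂ : ℝ) (x : ℝ × ℝ) : 0 ≤ Wmaj μ₁ μ₂ x := by
  have := m2_nonneg x.1; have := m2_nonneg x.2; have := m2_nonneg (x.1 + x.2)
  have h4 := rpow_nonneg (abs_nonneg x.1) (1 - μ₁)
  have h5 := rpow_nonneg (abs_nonneg x.2) (1 - μ₂)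
  apply mul_nonneg (add_nonneg (mul_nonneg ‹0 ≤ m2 x.1› ‹0 ≤ m2 x.2›)
    (mul_nonneg ‹0 ≤ m2 x.1› ‹0 ≤ m2 (x.1 + x.2)›)) (mul_nonneg h4 h5)

lemma prod_mul_integrable {f g : ℝ → ℝ} (hf : Integrable f) (hg : Integrable g) :
    Integrable (fun x : ℝ × ℝ => f x.1 * g x.2) :=
  hf.mul_prod hg

/-- integrability of `fun y => gg e y.1 * P (y.2 - y.1)` type functions via the shear map. -/
lemma shear_integrable {f g : ℝ → ℝ} (hf : Integrable f) (hg : Integrable g)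
    (hfm : Measurable f) (hgm : Measurable g) :
    Integrable (fun y : ℝ × ℝ => f y.1 * g (y.2 - y.1)) := by
  have hS : MeasurePreserving (fun z : ℝ × ℝ => (z.1, z.1 + z.2))
      ((volume : Measure ℝ).prod (volume : Measure ℝ))
      ((volume : Measure ℝ).prod (volume : Measure ℝ)) :=
    measurePreserving_prod_add (volume : Measure ℝ) (volume : Measure ℝ)
  have hmeas : AEStronglyMeasurable (fun y : ℝ × ℝ => f y.1 * g (y.2 - y.1))
      ((volume : Measure ℝ).prod (volume : Measure ℝ)) := by
    apply Measurable.aestronglyMeasurable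
    exact (hfm.comp measurable_fst).mul (hgm.comp (measurable_snd.sub measurable_fst))
  have hcomp : Integrable ((fun y : ℝ × ℝ => f y.1 * g (y.2 - y.1)) ∘
      (fun z : ℝ × ℝ => (z.1, z.1 + z.2))) ((volume : Measure ℝ).prod (volume : Measure ℝ)) := by
    have : ((fun y : ℝ × ℝ => f y.1 * g (y.2 - y.1)) ∘ (fun z : ℝ × ℝ => (z.1, z.1 + z.2)))
        = fun z : ℝ × ℝ => f z.1 * g z.2 := by
      funext z; simp [Function.comp]
    rw [this]
    exact prod_mul_integrable hf hg
  exact (hS.integrable_comp hmeas).mp hcomp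

lemma Wmaj_integrable {μ₁ μ₂ : ℝ} (h₁ : 0 < μ₁) (h₁' : μ₁ < 2) (h₂ : 0 < μ₂) (h₂' : μ₂ < 2)
    (hs : 1 < μ₁ + μ₂) : Integrable (Wmaj μ₁ μ₂) := by
  have he₁ : -1 < 1 - μ₁ := by linarith
  have he₁' : 1 - μ₁ < 1 := by linarith
  have he₂ : -1 < 1 - μ₂ := by linarith
  have he₂' : 1 - μ₂ < 1 := by linarith
  -- F1
  have hF1 : Integrable (fun x : ℝ × ℝ => gg (1 - μ₁) x.1 * gg (1 - μ₂) x.2) :=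
    prod_mul_integrable (gg_integrable he₁ he₁') (gg_integrable he₂ he₂')
  -- F2 : fun x => gg (1-μ₁) x.1 * (m2 (x.1+x.2) * |x.2| ^ (1-μ₂))
  have hV : Integrable (fun y : ℝ × ℝ => gg (1 - μ₁) y.1 * (m2 y.2 * |y.2 - y.1| ^ (1 - μ₂))) := by
    have hmeas : Measurable (fun y : ℝ × ℝ => gg (1 - μ₁) y.1 * (m2 y.2 * |y.2 - y.1| ^ (1 - μ₂))) := by
      unfold gg m2; fun_prop
    rcases le_or_gt μ₂ 1 with hcase | hcase
    · -- subadditivity case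
      have hmaj : Integrable (fun y : ℝ × ℝ =>
          gg (2 - μ₁ - μ₂) y.1 * gg 0 y.2 + gg (1 - μ₁) y.1 * gg (1 - μ₂) y.2) := by
        refine Integrable.add ?_ hF1
        exact prod_mul_integrable (gg_integrable (by linarith) (by linarith))
          (gg_integrable (by norm_num) (by norm_num))
      refine Integrable.mono' hmaj hmeas.aestronglyMeasurable ?_
      filter_upwards with y
      have hnn : 0 ≤ gg (1 - μ₁) y.1 * (m2 y.2 * |y.2 - y.1| ^ (1 - μ₂)) := by
        have := gg_nonneg (1 - μ₁) y.1; have := m2_nonneg y.2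
        have := rpow_nonneg (abs_nonneg (y.2 - y.1)) (1 - μ₂); positivity
      rw [Real.norm_eq_abs, abs_of_nonneg hnn]
      have hsub : |y.2 - y.1| ^ (1 - μ₂) ≤ |y.1| ^ (1 - μ₂) + |y.2| ^ (1 - μ₂) := by
        calc |y.2 - y.1| ^ (1 - μ₂) ≤ (|y.1| + |y.2|) ^ (1 - μ₂) := by
              apply Real.rpow_le_rpow (abs_nonneg _) ?_ (by linarith)
              calc |y.2 - y.1| ≤ |y.2| + |y.1| := abs_sub _ _
                _ = |y.1| + |y.2| := by ring
          _ ≤ |y.1| ^ (1 - μ₂) + |y.2| ^ (1 - μ₂) :=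
              rpow_add_le_add_rpow' (abs_nonneg _) (abs_nonneg _) (by linarith) (by linarith)
      calc gg (1 - μ₁) y.1 * (m2 y.2 * |y.2 - y.1| ^ (1 - μ₂))
          ≤ gg (1 - μ₁) y.1 * (m2 y.2 * (|y.1| ^ (1 - μ₂) + |y.2| ^ (1 - μ₂))) := by
            have := gg_nonneg (1 - μ₁) y.1; have := m2_nonneg y.2
            gcongr
        _ = (gg (1 - μ₁) y.1 * |y.1| ^ (1 - μ₂)) * m2 y.2
              + gg (1 - μ₁) y.1 * (m2 y.2 * |y.2| ^ (1 - μ₂)) := by ring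
        _ = gg (2 - μ₁ - μ₂) y.1 * gg 0 y.2 + gg (1 - μ₁) y.1 * gg (1 - μ₂) y.2 := by
            rw [gg_mul_rpow, gg_zero_eq]
            have : (1 - μ₁) + (1 - μ₂) = 2 - μ₁ - μ₂ := by ring
            rw [this]; rfl
    · -- singular case μ₂ > 1
      have hP : Integrable (fun u : ℝ => min (|u| ^ (1 - μ₂)) (|u| ^ (-1 - μ₂))) :=
        oneD_integrable (by linarith) (by linarith)
      have hmaj : Integrable (fun y : ℝ × ℝ =>
          gg (1 - μ₁) y.1 * gg 0 y.2
            + gg (1 - μ₁) y.1 * min (|y.2 - y.1| ^ (1 - μ₂)) (|y.2 - y.1| ^ (-1 - μ₂))) := by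
        refine Integrable.add ?_ ?_
        · exact prod_mul_integrable (gg_integrable he₁ he₁')
            (gg_integrable (by norm_num) (by norm_num))
        · exact shear_integrable (gg_integrable he₁ he₁') hP (gg_measurable _) (by fun_prop)
      refine Integrable.mono' hmaj hmeas.aestronglyMeasurable ?_
      filter_upwards with y
      have hnn : 0 ≤ gg (1 - μ₁) y.1 * (m2 y.2 * |y.2 - y.1| ^ (1 - μ₂)) := by
        have := gg_nonneg (1 - μ₁) y.1; have := m2_nonneg y.2
        have := rpow_nonneg (abs_nonneg (y.2 - y.1)) (1 - μ₂); positivity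
      rw [Real.norm_eq_abs, abs_of_nonneg hnn]
      have hgg := gg_nonneg (1 - μ₁) y.1
      rcases le_or_gt |y.2 - y.1| 1 with hu | hu
      · -- V ≤ second term
        have h1 : m2 y.2 * |y.2 - y.1| ^ (1 - μ₂) ≤
            min (|y.2 - y.1| ^ (1 - μ₂)) (|y.2 - y.1| ^ (-1 - μ₂)) := by
          rcases eq_or_ne (y.2 - y.1) 0 with h0 | h0
          · rw [h0]
            simp [Real.zero_rpow (by linarith : (1:ℝ) - μ₂ ≠ 0),
              Real.zero_rpow (by linarith : (-1:ℝ) - μ₂ ≠ 0)]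
          · have hpos : 0 < |y.2 - y.1| := abs_pos.mpr h0
            have hb : m2 y.2 * |y.2 - y.1| ^ (1 - μ₂) ≤ |y.2 - y.1| ^ (1 - μ₂) :=
              mul_le_of_le_one_left (rpow_nonneg (abs_nonneg _) _) (m2_le_one _)
            refine le_min hb (hb.trans ?_)
            exact Real.rpow_le_rpow_of_exponent_ge hpos hu (by linarith)
        calc gg (1 - μ₁) y.1 * (m2 y.2 * |y.2 - y.1| ^ (1 - μ₂))
            ≤ gg (1 - μ₁) y.1 *
              min (|y.2 - y.1| ^ (1 - μ₂)) (|y.2 - y.1| ^ (-1 - μ₂)) := by gcongr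
          _ ≤ gg (1 - μ₁) y.1 * gg 0 y.2 + gg (1 - μ₁) y.1 *
              min (|y.2 - y.1| ^ (1 - μ₂)) (|y.2 - y.1| ^ (-1 - μ₂)) :=
              le_add_of_nonneg_left (mul_nonneg (gg_nonneg _ _) (gg_nonneg _ _))
      · -- V ≤ first term
        have h1 : |y.2 - y.1| ^ (1 - μ₂) ≤ 1 :=
          Real.rpow_le_one_of_one_le_of_nonpos hu.le (by linarith)
        calc gg (1 - μ₁) y.1 * (m2 y.2 * |y.2 - y.1| ^ (1 - μ₂))
            ≤ gg (1 - μ₁) y.1 * (m2 y.2 * 1) := by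
              have := m2_nonneg y.2; gcongr
          _ = gg (1 - μ₁) y.1 * gg 0 y.2 := by rw [mul_one, gg_zero_eq]
          _ ≤ gg (1 - μ₁) y.1 * gg 0 y.2 + gg (1 - μ₁) y.1 *
              min (|y.2 - y.1| ^ (1 - μ₂)) (|y.2 - y.1| ^ (-1 - μ₂)) := by
              have h2 : 0 ≤ min (|y.2 - y.1| ^ (1 - μ₂)) (|y.2 - y.1| ^ (-1 - μ₂)) :=
                le_min (rpow_nonneg (abs_nonneg _) _) (rpow_nonneg (abs_nonneg _) _)
              exact le_add_of_nonneg_right (mul_nonneg (gg_nonneg _ _) h2)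
  -- conclude : Wmaj = F1 + (V ∘ shear)
  have hF2 : Integrable (fun x : ℝ × ℝ => gg (1 - μ₁) x.1 * (m2 (x.1 + x.2) * |x.2| ^ (1 - μ₂))) := by
    have hS : MeasurePreserving (fun z : ℝ × ℝ => (z.1, z.1 + z.2))
        ((volume : Measure ℝ).prod (volume : Measure ℝ))
        ((volume : Measure ℝ).prod (volume : Measure ℝ)) :=
      measurePreserving_prod_add (volume : Measure ℝ) (volume : Measure ℝ)
    have hmeas : AEStronglyMeasurable
        (fun y : ℝ × ℝ => gg (1 - μ₁) y.1 * (m2 y.2 * |y.2 - y.1| ^ (1 - μ₂)))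
        ((volume : Measure ℝ).prod (volume : Measure ℝ)) := by
      apply Measurable.aestronglyMeasurable; unfold gg m2; fun_prop
    have := (hS.integrable_comp hmeas).mpr hV
    have heq : ((fun y : ℝ × ℝ => gg (1 - μ₁) y.1 * (m2 y.2 * |y.2 - y.1| ^ (1 - μ₂))) ∘
        (fun z : ℝ × ℝ => (z.1, z.1 + z.2)))
        = fun x : ℝ × ℝ => gg (1 - μ₁) x.1 * (m2 (x.1 + x.2) * |x.2| ^ (1 - μ₂)) := by
      funext z; simp [Function.comp]
    rw [heq] at this; exact this
  have : Wmaj μ₁ μ₂ = fun x : ℝ × ℝ => gg (1 - μ₁) x.1 * gg (1 - μ₂) x.2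
      + gg (1 - μ₁) x.1 * (m2 (x.1 + x.2) * |x.2| ^ (1 - μ₂)) := by
    funext x; unfold Wmaj gg; ring
  rw [this]
  exact hF1.add hF2

end majorant
section calculusPart

/-- Partial derivative in the first variable. -/
def pd1 (f : ℝ × ℝ → ℝ) (p : ℝ × ℝ) : ℝ := deriv (fun t => f (t, p.2)) p.1

/-- Partial derivative in the second variable. -/
def pd2 (f : ℝ × ℝ → ℝ) (p : ℝ × ℝ) : ℝ := deriv (fun x => f (p.1, x)) p.2

lemma eventually_zero_of_nmem {f : ℝ × ℝ → ℝ} (p : ℝ × ℝ) (hp : p ∉ tsupport f) :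
    ∀ᶠ q in nhds p, f q = 0 :=
  Filter.eventually_of_mem ((isClosed_tsupport f).isOpen_compl.mem_nhds hp)
    fun q hq => image_eq_zero_of_notMem_tsupport hq

lemma hasCompactSupport_pd1 {f : ℝ × ℝ → ℝ} (hf : HasCompactSupport f) :
    HasCompactSupport (pd1 f) := by
  refine HasCompactSupport.intro hf ?_
  intro p hp
  have hc : Continuous (fun t : ℝ => ((t, p.2) : ℝ × ℝ)) := by fun_prop
  have htd : Filter.Tendsto (fun t : ℝ => ((t, p.2) : ℝ × ℝ)) (nhds p.1) (nhds p) := by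
    simpa using hc.tendsto p.1
  have hev : (fun t : ℝ => f (t, p.2)) =ᶠ[nhds p.1] (fun _ => (0:ℝ)) :=
    htd.eventually (eventually_zero_of_nmem p hp)
  rw [pd1, hev.deriv_eq, deriv_const]

lemma hasCompactSupport_pd2 {f : ℝ × ℝ → ℝ} (hf : HasCompactSupport f) :
    HasCompactSupport (pd2 f) := by
  refine HasCompactSupport.intro hf ?_
  intro p hp
  have hc : Continuous (fun x : ℝ => ((p.1, x) : ℝ × ℝ)) := by fun_prop
  have htd : Filter.Tendsto (fun x : ℝ => ((p.1, x) : ℝ × ℝ)) (nhds p.2) (nhds p) := by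
    simpa using hc.tendsto p.2
  have hev : (fun x : ℝ => f (p.1, x)) =ᶠ[nhds p.2] (fun _ => (0:ℝ)) :=
    htd.eventually (eventually_zero_of_nmem p hp)
  rw [pd2, hev.deriv_eq, deriv_const]

lemma pd2_eq {ψ : ℝ × ℝ → ℝ} (hψ : ContDiff ℝ 2 ψ) (p : ℝ × ℝ) :
    pd2 ψ p = fderiv ℝ ψ p (0, 1) := by
  have hd : HasFDerivAt ψ (fderiv ℝ ψ p) p :=
    ((hψ.differentiable (by norm_num)) p).hasFDerivAt
  have hcurve : HasDerivAt (fun x : ℝ => ((p.1, x) : ℝ × ℝ)) ((0 : ℝ), (1 : ℝ)) p.2 :=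
    (hasDerivAt_const p.2 p.1).prodMk (hasDerivAt_id p.2)
  have : HasDerivAt (fun x : ℝ => ψ (p.1, x)) (fderiv ℝ ψ p (0, 1)) p.2 := by
    have := hd.comp_hasDerivAt p.2 (by simpa using hcurve)
    exact this
  exact this.deriv

lemma pd1_eq_of_C1 {h : ℝ × ℝ → ℝ} (hh : ContDiff ℝ 1 h) (p : ℝ × ℝ) :
    pd1 h p = fderiv ℝ h p (1, 0) := by
  have hd : HasFDerivAt h (fderiv ℝ h p) p :=
    ((hh.differentiable one_ne_zero) p).hasFDerivAt
  have hcurve : HasDerivAt (fun t : ℝ => ((t, p.2) : ℝ × ℝ)) ((1 : ℝ), (0 : ℝ)) p.1 :=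
    (hasDerivAt_id p.1).prodMk (hasDerivAt_const p.1 p.2)
  have : HasDerivAt (fun t : ℝ => h (t, p.2)) (fderiv ℝ h p (1, 0)) p.1 := by
    have := hd.comp_hasDerivAt p.1 (by simpa using hcurve)
    exact this
  exact this.deriv

lemma contDiff_fderiv_apply {ψ : ℝ × ℝ → ℝ} (hψ : ContDiff ℝ 2 ψ) :
    ContDiff ℝ 1 (fun q => fderiv ℝ ψ q (0, 1)) := by
  exact (hψ.fderiv_right (by norm_num)).clm_apply contDiff_const

lemma continuous_pd1_pd2 {ψ : ℝ × ℝ → ℝ} (hψ : ContDiff ℝ 2 ψ) :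
    Continuous (pd1 (pd2 ψ)) := by
  have hh := contDiff_fderiv_apply hψ
  have heq : pd1 (pd2 ψ) = fun p => fderiv ℝ (fun q => fderiv ℝ ψ q (0, 1)) p (1, 0) := by
    funext p
    have h1 : pd2 ψ = fun q => fderiv ℝ ψ q (0, 1) := funext (pd2_eq hψ)
    rw [h1, pd1_eq_of_C1 hh]
  rw [heq]
  exact (hh.continuous_fderiv one_ne_zero).clm_apply continuous_const

end calculusPart
section Kbounds

open Complex intervalIntegral

/-- The oscillatory kernel. -/
def KK (η₁ η₂ y : ℝ) : ℂ :=
  ∫ z in (0:ℝ)..y,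
    (∫ w in (0:ℝ)..z, Complex.exp (Complex.I * (η₁ : ℂ) * (w : ℂ))) *
      Complex.exp (Complex.I * (η₂ : ℂ) * (z : ℂ))

lemma norm_exp_I_mul (a t : ℝ) : ‖Complex.exp (Complex.I * (a : ℂ) * (t : ℂ))‖ = 1 := by
  rw [Complex.norm_exp]
  simp [Complex.mul_re]

lemma norm_inner_le_abs (η₁ z : ℝ) :
    ‖∫ w in (0:ℝ)..z, Complex.exp (Complex.I * (η₁ : ℂ) * (w : ℂ))‖ ≤ |z| := by
  have := intervalIntegral.norm_integral_le_of_norm_le_const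
    (C := 1) (f := fun w : ℝ => Complex.exp (Complex.I * (η₁ : ℂ) * (w : ℂ)))
    (a := 0) (b := z) (fun w _ => le_of_eq (norm_exp_I_mul η₁ w))
  simpa using this

lemma inner_eq {η₁ : ℝ} (h : η₁ ≠ 0) (z : ℝ) :
    (∫ w in (0:ℝ)..z, Complex.exp (Complex.I * (η₁ : ℂ) * (w : ℂ)))
      = (Complex.exp (Complex.I * η₁ * z) - 1) / (Complex.I * η₁) := by
  have hc : (Complex.I * (η₁ : ℂ)) ≠ 0 :=
    mul_ne_zero Complex.I_ne_zero (Complex.ofReal_ne_zero.mpr h)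
  have := integral_exp_mul_complex (a := 0) (b := z) hc
  simp only [mul_assoc] at this ⊢
  rw [this]
  norm_num

lemma norm_inner_le_two_div {η₁ : ℝ} (h : η₁ ≠ 0) (z : ℝ) :
    ‖∫ w in (0:ℝ)..z, Complex.exp (Complex.I * (η₁ : ℂ) * (w : ℂ))‖ ≤ 2 / |η₁| := by
  rw [inner_eq h z, norm_div]
  have h1 : ‖Complex.exp (Complex.I * (η₁:ℂ) * (z:ℂ)) - 1‖ ≤ 2 := by
    calc ‖Complex.exp (Complex.I * (η₁:ℂ) * (z:ℂ)) - 1‖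
        ≤ ‖Complex.exp (Complex.I * (η₁:ℂ) * (z:ℂ))‖ + ‖(1:ℂ)‖ := norm_sub_le _ _
      _ = 2 := by rw [norm_exp_I_mul]; norm_num
  have h2 : ‖Complex.I * (η₁:ℂ)‖ = |η₁| := by
    rw [norm_mul, Complex.norm_I, one_mul, Complex.norm_real, Real.norm_eq_abs]
  rw [h2]
  have h3 : (0:ℝ) < |η₁| := abs_pos.mpr h
  gcongr

end Kbounds

section KboundsMain

lemma norm_I_mul_real (a : ℝ) : ‖Complex.I * (a : ℂ)‖ = |a| := by
  rw [norm_mul, Complex.norm_I, one_mul, Complex.norm_real, Real.norm_eq_abs]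

lemma abs_le_abs_of_uIoc {y z : ℝ} (hz : z ∈ Set.uIoc 0 y) : |z| ≤ |y| := by
  rcases Set.mem_uIoc.mp hz with ⟨h0, hy⟩ | ⟨hy, h0⟩
  · rw [abs_of_pos h0, abs_of_pos (lt_of_lt_of_le h0 hy)]; exact hy
  · rw [abs_of_nonpos h0, abs_of_neg (lt_of_lt_of_le hy h0)]
    exact neg_le_neg hy.le

lemma KB1 {η₁ η₂ y R : ℝ} (hR : 0 ≤ R) (hy : |y| ≤ R) : ‖KK η₁ η₂ y‖ ≤ R ^ 2 := by
  have h := intervalIntegral.norm_integral_le_of_norm_le_const (C := R) (a := (0:ℝ)) (b := y)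
    (f := fun z : ℝ => (∫ w in (0:ℝ)..z, Complex.exp (Complex.I * (η₁ : ℂ) * (w : ℂ))) *
      Complex.exp (Complex.I * (η₂ : ℂ) * (z : ℂ))) ?_
  · calc ‖KK η₁ η₂ y‖ ≤ R * |y - 0| := h
      _ = R * |y| := by norm_num
      _ ≤ R * R := by gcongr
      _ = R ^ 2 := (sq R).symm
  · intro z hz
    rw [norm_mul, norm_exp_I_mul, mul_one]
    exact (norm_inner_le_abs η₁ z).trans ((abs_le_abs_of_uIoc hz).trans hy)

lemma KB2 {η₁ η₂ y R : ℝ} (h1 : η₁ ≠ 0) (hR : 0 ≤ R) (hy : |y| ≤ R) :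
    ‖KK η₁ η₂ y‖ ≤ 2 * R / |η₁| := by
  have h := intervalIntegral.norm_integral_le_of_norm_le_const (C := 2 / |η₁|) (a := (0:ℝ))
    (b := y)
    (f := fun z : ℝ => (∫ w in (0:ℝ)..z, Complex.exp (Complex.I * (η₁ : ℂ) * (w : ℂ))) *
      Complex.exp (Complex.I * (η₂ : ℂ) * (z : ℂ))) ?_
  · have h2 : (0:ℝ) ≤ 2 / |η₁| := by positivity
    calc ‖KK η₁ η₂ y‖ ≤ 2 / |η₁| * |y - 0| := h
      _ = 2 / |η₁| * |y| := by norm_num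
      _ ≤ 2 / |η₁| * R := by gcongr
      _ = 2 * R / |η₁| := by ring
  · intro z _
    rw [norm_mul, norm_exp_I_mul, mul_one]
    exact norm_inner_le_two_div h1 z

lemma alg_identity (a b E1 E2 : ℂ) (ha : a ≠ 0) (hb : b ≠ 0) (hab : a + b ≠ 0) :
    ((E1 * E2 - 1) / (a + b) - (E2 - 1) / b) / a
      = ((E1 - 1) / a * E2 - (E1 * E2 - 1) / (a + b)) / b := by
  field_simp
  ring

lemma KK_eq {η₁ η₂ : ℝ} (h1 : η₁ ≠ 0) (h2 : η₂ ≠ 0) (h12 : η₁ + η₂ ≠ 0) (y : ℝ) :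
    KK η₁ η₂ y =
      ((Complex.exp (Complex.I * ((η₁ + η₂ : ℝ) : ℂ) * (y : ℂ)) - 1) /
          (Complex.I * ((η₁ + η₂ : ℝ) : ℂ)) -
        (Complex.exp (Complex.I * (η₂ : ℂ) * (y : ℂ)) - 1) / (Complex.I * (η₂ : ℂ))) /
        (Complex.I * (η₁ : ℂ)) := by
  have hc1 : (Complex.I * (η₁ : ℂ)) ≠ 0 :=
    mul_ne_zero Complex.I_ne_zero (Complex.ofReal_ne_zero.mpr h1)
  have hc2 : (Complex.I * (η₂ : ℂ)) ≠ 0 :=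
    mul_ne_zero Complex.I_ne_zero (Complex.ofReal_ne_zero.mpr h2)
  have hc12 : (Complex.I * ((η₁ + η₂ : ℝ) : ℂ)) ≠ 0 :=
    mul_ne_zero Complex.I_ne_zero (Complex.ofReal_ne_zero.mpr h12)
  have hint : KK η₁ η₂ y = ∫ z in (0:ℝ)..y,
      (Complex.exp (Complex.I * ((η₁ + η₂ : ℝ) : ℂ) * (z : ℂ)) -
        Complex.exp (Complex.I * (η₂ : ℂ) * (z : ℂ))) / (Complex.I * (η₁ : ℂ)) := by
    unfold KK
    apply intervalIntegral.integral_congr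
    intro z _
    show (∫ w in (0:ℝ)..z, Complex.exp (Complex.I * (η₁ : ℂ) * (w : ℂ))) *
        Complex.exp (Complex.I * (η₂ : ℂ) * (z : ℂ))
      = (Complex.exp (Complex.I * ((η₁ + η₂ : ℝ) : ℂ) * (z : ℂ)) -
          Complex.exp (Complex.I * (η₂ : ℂ) * (z : ℂ))) / (Complex.I * (η₁ : ℂ))
    rw [inner_eq h1 z]
    have hexp : Complex.exp (Complex.I * ((η₁ + η₂ : ℝ) : ℂ) * (z : ℂ))
        = Complex.exp (Complex.I * (η₁ : ℂ) * (z : ℂ)) *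
          Complex.exp (Complex.I * (η₂ : ℂ) * (z : ℂ)) := by
      rw [← Complex.exp_add]
      congr 1
      push_cast
      ring
    field_simp [hexp]
    rw [show Complex.I * (z:ℂ) * ((η₁ + η₂ : ℝ) : ℂ)
        = Complex.I * (η₁:ℂ) * (z:ℂ) + Complex.I * (η₂:ℂ) * (z:ℂ) by push_cast; ring,
      Complex.exp_add, show Complex.I * (z:ℂ) * (η₂:ℂ) = Complex.I * (η₂:ℂ) * (z:ℂ) by ring]
    ring
  rw [hint]
  have hi1 : IntervalIntegrable
      (fun z : ℝ => Complex.exp (Complex.I * ((η₁ + η₂ : ℝ) : ℂ) * (z : ℂ))) volume 0 y := by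
    apply Continuous.intervalIntegrable
    exact Complex.continuous_exp.comp (by fun_prop)
  have hi2 : IntervalIntegrable
      (fun z : ℝ => Complex.exp (Complex.I * (η₂ : ℂ) * (z : ℂ))) volume 0 y := by
    apply Continuous.intervalIntegrable
    exact Complex.continuous_exp.comp (by fun_prop)
  rw [intervalIntegral.integral_div, intervalIntegral.integral_sub hi1 hi2,
    integral_exp_mul_complex hc12, integral_exp_mul_complex hc2]
  norm_num

lemma KB4 {η₁ η₂ : ℝ} (h1 : η₁ ≠ 0) (h2 : η₂ ≠ 0) (h12 : η₁ + η₂ ≠ 0) (y : ℝ) :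
    ‖KK η₁ η₂ y‖ ≤ (2 / |η₁ + η₂| + 2 / |η₂|) / |η₁| := by
  rw [KK_eq h1 h2 h12 y, norm_div, norm_I_mul_real]
  rw [div_le_div_iff_of_pos_right (abs_pos.mpr h1)]
  calc ‖(Complex.exp (Complex.I * ((η₁ + η₂ : ℝ) : ℂ) * (y : ℂ)) - 1) /
          (Complex.I * ((η₁ + η₂ : ℝ) : ℂ)) -
        (Complex.exp (Complex.I * (η₂ : ℂ) * (y : ℂ)) - 1) / (Complex.I * (η₂ : ℂ))‖
      ≤ ‖(Complex.exp (Complex.I * ((η₁ + η₂ : ℝ) : ℂ) * (y : ℂ)) - 1) /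
          (Complex.I * ((η₁ + η₂ : ℝ) : ℂ))‖ +
        ‖(Complex.exp (Complex.I * (η₂ : ℂ) * (y : ℂ)) - 1) / (Complex.I * (η₂ : ℂ))‖ :=
        norm_sub_le _ _
    _ ≤ 2 / |η₁ + η₂| + 2 / |η₂| := by
        apply add_le_add
        · rw [norm_div, norm_I_mul_real, div_le_div_iff_of_pos_right (abs_pos.mpr h12)]
          calc ‖Complex.exp (Complex.I * ((η₁ + η₂ : ℝ) : ℂ) * (y : ℂ)) - 1‖
                ≤ ‖Complex.exp (Complex.I * ((η₁ + η₂ : ℝ) : ℂ) * (y : ℂ))‖ + ‖(1:ℂ)‖ :=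
                norm_sub_le _ _
              _ = 2 := by rw [norm_exp_I_mul]; norm_num
        · rw [norm_div, norm_I_mul_real, div_le_div_iff_of_pos_right (abs_pos.mpr h2)]
          calc ‖Complex.exp (Complex.I * (η₂ : ℂ) * (y : ℂ)) - 1‖
                ≤ ‖Complex.exp (Complex.I * (η₂ : ℂ) * (y : ℂ))‖ + ‖(1:ℂ)‖ := norm_sub_le _ _
              _ = 2 := by rw [norm_exp_I_mul]; norm_num

lemma KB3 {η₁ η₂ y R : ℝ} (h1 : η₁ ≠ 0) (h2 : η₂ ≠ 0) (h12 : η₁ + η₂ ≠ 0)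
    (hR : 0 ≤ R) (hy : |y| ≤ R) : ‖KK η₁ η₂ y‖ ≤ 2 * R / |η₂| := by
  have hc1 : (Complex.I * (η₁ : ℂ)) ≠ 0 :=
    mul_ne_zero Complex.I_ne_zero (Complex.ofReal_ne_zero.mpr h1)
  have hc2 : (Complex.I * (η₂ : ℂ)) ≠ 0 :=
    mul_ne_zero Complex.I_ne_zero (Complex.ofReal_ne_zero.mpr h2)
  have hc12 : (Complex.I * ((η₁ + η₂ : ℝ) : ℂ)) ≠ 0 :=
    mul_ne_zero Complex.I_ne_zero (Complex.ofReal_ne_zero.mpr h12)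
  -- integration by parts identity
  have hibp : KK η₁ η₂ y =
      ((Complex.exp (Complex.I * (η₁ : ℂ) * (y : ℂ)) - 1) / (Complex.I * (η₁ : ℂ)) *
          Complex.exp (Complex.I * (η₂ : ℂ) * (y : ℂ)) -
        (Complex.exp (Complex.I * ((η₁ + η₂ : ℝ) : ℂ) * (y : ℂ)) - 1) /
          (Complex.I * ((η₁ + η₂ : ℝ) : ℂ))) / (Complex.I * (η₂ : ℂ)) := by
    rw [KK_eq h1 h2 h12 y]
    have hexp : Complex.exp (Complex.I * ((η₁ + η₂ : ℝ) : ℂ) * (y : ℂ))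
        = Complex.exp (Complex.I * (η₁ : ℂ) * (y : ℂ)) *
          Complex.exp (Complex.I * (η₂ : ℂ) * (y : ℂ)) := by
      rw [← Complex.exp_add]; congr 1; push_cast; ring
    have hab : Complex.I * ((η₁ + η₂ : ℝ) : ℂ) = Complex.I * (η₁ : ℂ) + Complex.I * (η₂ : ℂ) := by
      push_cast; ring
    rw [hexp, hab]
    exact alg_identity _ _ _ _ hc1 hc2 (hab ▸ hc12)
  rw [hibp, norm_div, norm_I_mul_real]
  rw [show (2:ℝ) * R / |η₂| = 2 * R / |η₂| from rfl, div_le_div_iff_of_pos_right (abs_pos.mpr h2)]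
  have hg : ‖(Complex.exp (Complex.I * (η₁ : ℂ) * (y : ℂ)) - 1) / (Complex.I * (η₁ : ℂ))‖ ≤ R := by
    rw [← inner_eq h1 y]
    exact (norm_inner_le_abs η₁ y).trans hy
  have hF : ‖(Complex.exp (Complex.I * ((η₁ + η₂ : ℝ) : ℂ) * (y : ℂ)) - 1) /
      (Complex.I * ((η₁ + η₂ : ℝ) : ℂ))‖ ≤ R := by
    rw [← inner_eq h12 y]
    exact (norm_inner_le_abs (η₁ + η₂) y).trans hy
  calc ‖(Complex.exp (Complex.I * (η₁ : ℂ) * (y : ℂ)) - 1) / (Complex.I * (η₁ : ℂ)) *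
          Complex.exp (Complex.I * (η₂ : ℂ) * (y : ℂ)) -
        (Complex.exp (Complex.I * ((η₁ + η₂ : ℝ) : ℂ) * (y : ℂ)) - 1) /
          (Complex.I * ((η₁ + η₂ : ℝ) : ℂ))‖
      ≤ ‖(Complex.exp (Complex.I * (η₁ : ℂ) * (y : ℂ)) - 1) / (Complex.I * (η₁ : ℂ)) *
          Complex.exp (Complex.I * (η₂ : ℂ) * (y : ℂ))‖ +
        ‖(Complex.exp (Complex.I * ((η₁ + η₂ : ℝ) : ℂ) * (y : ℂ)) - 1) /
          (Complex.I * ((η₁ + η₂ : ℝ) : ℂ))‖ := norm_sub_le _ _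
    _ ≤ R + R := by
        apply add_le_add ?_ hF
        rw [norm_mul, norm_exp_I_mul, mul_one]
        exact hg
    _ = 2 * R := by ring

end KboundsMain
section KSq

lemma rpow_neg_two_eq {x : ℝ} (hx : 0 < x) : x ^ (-2:ℝ) = (x ^ 2)⁻¹ := by
  rw [show (-2:ℝ) = ((-2 : ℤ) : ℝ) by norm_num, Real.rpow_intCast]
  rw [zpow_neg]
  norm_cast

lemma m2_of_le_one {t : ℝ} (ht : t ≠ 0) (h : |t| ≤ 1) : m2 t = 1 := by
  have hpos : 0 < |t| := abs_pos.mpr ht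
  have : (1:ℝ) ≤ |t| ^ (-2:ℝ) := by
    calc (1:ℝ) = (1:ℝ) ^ (-2:ℝ) := (Real.one_rpow _).symm
      _ ≤ |t| ^ (-2:ℝ) := Real.rpow_le_rpow_of_nonpos hpos h (by norm_num)
  exact min_eq_left this

lemma m2_of_one_le {t : ℝ} (h : 1 ≤ |t|) : m2 t = (|t| ^ 2)⁻¹ := by
  have hpos : (0:ℝ) < |t| := lt_of_lt_of_le one_pos h
  have h1 : |t| ^ (-2:ℝ) ≤ 1 := Real.rpow_le_one_of_one_le_of_nonpos h (by norm_num)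
  rw [m2, min_eq_right h1, rpow_neg_two_eq hpos]

lemma add_sq_le_two (a b : ℝ) : (a + b) ^ 2 ≤ 2 * a ^ 2 + 2 * b ^ 2 := by
  nlinarith [sq_nonneg (a - b)]

lemma KK_sq_bound {R : ℝ} (hR : 1 ≤ R) {η₁ η₂ y : ℝ} (h1 : η₁ ≠ 0) (h2 : η₂ ≠ 0)
    (h12 : η₁ + η₂ ≠ 0) (hy : |y| ≤ R) :
    ‖KK η₁ η₂ y‖ ^ 2 ≤ 8 * (R + 2) ^ 4 * (m2 η₁ * m2 η₂ + m2 η₁ * m2 (η₁ + η₂)) := by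
  have hR0 : (0:ℝ) ≤ R := by linarith
  have hKnn : (0:ℝ) ≤ ‖KK η₁ η₂ y‖ := norm_nonneg _
  have hm1 := m2_nonneg η₁; have hm2 := m2_nonneg η₂; have hm12 := m2_nonneg (η₁ + η₂)
  have hRp : (1:ℝ) ≤ (R + 2) ^ 4 := one_le_pow₀ (by linarith)
  have hC8 : (8:ℝ) ≤ 8 * (R + 2) ^ 4 := by linarith
  have hC0 : (0:ℝ) ≤ 8 * (R + 2) ^ 4 := by positivity
  rcases le_or_gt |η₁| 1 with hu | hu
  · -- small η₁
    rw [m2_of_le_one h1 hu]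
    have hKb : ‖KK η₁ η₂ y‖ ^ 2 ≤ 8 * (R + 2) ^ 4 * m2 η₂ := by
      rcases le_or_gt |η₂| 1 with hv | hv
      · rw [m2_of_le_one h2 hv]
        have hb := KB1 (η₁ := η₁) (η₂ := η₂) hR0 hy
        calc ‖KK η₁ η₂ y‖ ^ 2 ≤ (R ^ 2) ^ 2 := pow_le_pow_left₀ hKnn hb 2
          _ = R ^ 4 := by ring
          _ ≤ (R + 2) ^ 4 := by gcongr <;> linarith
          _ ≤ 8 * (R + 2) ^ 4 * 1 := by linarith
      · rw [m2_of_one_le hv.le]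
        have hb := KB3 h1 h2 h12 hR0 hy
        have hv0 : (0:ℝ) < |η₂| := lt_trans one_pos hv
        calc ‖KK η₁ η₂ y‖ ^ 2 ≤ (2 * R / |η₂|) ^ 2 := pow_le_pow_left₀ hKnn hb 2
          _ = (2 * R) ^ 2 * (|η₂| ^ 2)⁻¹ := by rw [div_pow, div_eq_mul_inv]
          _ ≤ 8 * (R + 2) ^ 4 * (|η₂| ^ 2)⁻¹ := by
            apply mul_le_mul_of_nonneg_right ?_ (by positivity)
            nlinarith
    calc ‖KK η₁ η₂ y‖ ^ 2 ≤ 8 * (R + 2) ^ 4 * m2 η₂ := hKb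
      _ ≤ 8 * (R + 2) ^ 4 * (1 * m2 η₂ + 1 * m2 (η₁ + η₂)) := by
        apply mul_le_mul_of_nonneg_left ?_ hC0
        simp only [one_mul]
        linarith
  · have hu0 : (0:ℝ) < |η₁| := lt_trans one_pos hu
    have hB2case : (m2 η₂ = 1 ∨ m2 (η₁ + η₂) = 1) →
        ‖KK η₁ η₂ y‖ ^ 2 ≤ 8 * (R + 2) ^ 4 * (m2 η₁ * m2 η₂ + m2 η₁ * m2 (η₁ + η₂)) := by
      intro hcase
      have hb := KB2 (η₂ := η₂) h1 hR0 hy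
      have hK2 : ‖KK η₁ η₂ y‖ ^ 2 ≤ (2 * R) ^ 2 * (|η₁| ^ 2)⁻¹ := by
        calc ‖KK η₁ η₂ y‖ ^ 2 ≤ (2 * R / |η₁|) ^ 2 := pow_le_pow_left₀ hKnn hb 2
          _ = (2 * R) ^ 2 * (|η₁| ^ 2)⁻¹ := by rw [div_pow, div_eq_mul_inv]
      have hm1eq : m2 η₁ = (|η₁| ^ 2)⁻¹ := m2_of_one_le hu.le
      have hstep : (2 * R) ^ 2 * (|η₁| ^ 2)⁻¹ ≤ 8 * (R + 2) ^ 4 * (|η₁| ^ 2)⁻¹ := by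
        apply mul_le_mul_of_nonneg_right ?_ (by positivity)
        nlinarith
      have hlast : 8 * (R + 2) ^ 4 * (|η₁| ^ 2)⁻¹
          ≤ 8 * (R + 2) ^ 4 * (m2 η₁ * m2 η₂ + m2 η₁ * m2 (η₁ + η₂)) := by
        apply mul_le_mul_of_nonneg_left ?_ hC0
        rcases hcase with hc | hc
        · rw [hc, hm1eq]
          have : (0:ℝ) ≤ (|η₁| ^ 2)⁻¹ * m2 (η₁ + η₂) := by positivity
          linarith
        · rw [hc, hm1eq]
          have : (0:ℝ) ≤ (|η₁| ^ 2)⁻¹ * m2 η₂ := by positivity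
          linarith
      linarith
    rcases le_or_gt |η₂| 1 with hv | hv
    · exact hB2case (Or.inl (m2_of_le_one h2 hv))
    · rcases le_or_gt |η₁ + η₂| 1 with hs | hs
      · exact hB2case (Or.inr (m2_of_le_one h12 hs))
      · -- all large : use B4
        rw [m2_of_one_le hu.le, m2_of_one_le hv.le, m2_of_one_le hs.le]
        have hb := KB4 h1 h2 h12 y
        have hv0 : (0:ℝ) < |η₂| := lt_trans one_pos hv
        have hs0 : (0:ℝ) < |η₁ + η₂| := lt_trans one_pos hs
        have hK2 : ‖KK η₁ η₂ y‖ ^ 2 ≤ ((2 / |η₁ + η₂| + 2 / |η₂|) / |η₁|) ^ 2 :=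
          pow_le_pow_left₀ hKnn hb 2
        have key : ((2 / |η₁ + η₂| + 2 / |η₂|) / |η₁|) ^ 2
            ≤ 8 * ((|η₁| ^ 2)⁻¹ * (|η₂| ^ 2)⁻¹ + (|η₁| ^ 2)⁻¹ * (|η₁ + η₂| ^ 2)⁻¹) := by
          rw [div_pow]
          have h8 : (2 / |η₁ + η₂| + 2 / |η₂|) ^ 2 ≤ 8 / |η₁ + η₂| ^ 2 + 8 / |η₂| ^ 2 := by
            have e1 : (2 / |η₁ + η₂|) ^ 2 = 4 / |η₁ + η₂| ^ 2 := by rw [div_pow]; norm_num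
            have e2 : (2 / |η₂|) ^ 2 = 4 / |η₂| ^ 2 := by rw [div_pow]; norm_num
            have := add_sq_le_two (2 / |η₁ + η₂|) (2 / |η₂|)
            rw [e1, e2] at this
            calc (2 / |η₁ + η₂| + 2 / |η₂|) ^ 2
                ≤ 2 * (4 / |η₁ + η₂| ^ 2) + 2 * (4 / |η₂| ^ 2) := this
              _ = 8 / |η₁ + η₂| ^ 2 + 8 / |η₂| ^ 2 := by ring
          calc (2 / |η₁ + η₂| + 2 / |η₂|) ^ 2 / |η₁| ^ 2
              ≤ (8 / |η₁ + η₂| ^ 2 + 8 / |η₂| ^ 2) / |η₁| ^ 2 := by gcongr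
            _ = 8 * ((|η₁| ^ 2)⁻¹ * (|η₂| ^ 2)⁻¹ + (|η₁| ^ 2)⁻¹ * (|η₁ + η₂| ^ 2)⁻¹) := by
              field_simp
              ring
        calc ‖KK η₁ η₂ y‖ ^ 2
            ≤ 8 * ((|η₁| ^ 2)⁻¹ * (|η₂| ^ 2)⁻¹ + (|η₁| ^ 2)⁻¹ * (|η₁ + η₂| ^ 2)⁻¹) :=
              hK2.trans key
          _ ≤ 8 * (R + 2) ^ 4 * ((|η₁| ^ 2)⁻¹ * (|η₂| ^ 2)⁻¹ + (|η₁| ^ 2)⁻¹ * (|η₁ + η₂| ^ 2)⁻¹) := by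
              have hnn : (0:ℝ) ≤ (|η₁| ^ 2)⁻¹ * (|η₂| ^ 2)⁻¹ + (|η₁| ^ 2)⁻¹ * (|η₁ + η₂| ^ 2)⁻¹ := by
                positivity
              calc 8 * ((|η₁| ^ 2)⁻¹ * (|η₂| ^ 2)⁻¹ + (|η₁| ^ 2)⁻¹ * (|η₁ + η₂| ^ 2)⁻¹)
                  ≤ (8 * (R + 2) ^ 4) * ((|η₁| ^ 2)⁻¹ * (|η₂| ^ 2)⁻¹ + (|η₁| ^ 2)⁻¹ * (|η₁ + η₂| ^ 2)⁻¹) :=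
                    mul_le_mul_of_nonneg_right hC8 hnn

end KSq
section QpsiBounds

/-- `Q_ψ(η₁,η₂) = (∫ |∂₁∂₂ψ(t,y)|² |∫_0^y (∫_0^z e^{iη₁w} dw) e^{iη₂z} dz|² dt dy)^{1/2}`. -/
def Qpsi (ψ : ℝ × ℝ → ℝ) (η₁ η₂ : ℝ) : ℝ :=
  Real.sqrt (∫ p : ℝ × ℝ, |pd1 (pd2 ψ) p| ^ 2 *
    ‖∫ z in (0:ℝ)..p.2,
        (∫ w in (0:ℝ)..z, Complex.exp (Complex.I * (η₁ : ℂ) * (w : ℂ))) *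
          Complex.exp (Complex.I * (η₂ : ℂ) * (z : ℂ))‖ ^ 2)

lemma Qpsi_eq (ψ : ℝ × ℝ → ℝ) (η₁ η₂ : ℝ) :
    Qpsi ψ η₁ η₂ = Real.sqrt (∫ p : ℝ × ℝ, |pd1 (pd2 ψ) p| ^ 2 * ‖KK η₁ η₂ p.2‖ ^ 2) := rfl

lemma Qpsi_sq_bound {ψ : ℝ × ℝ → ℝ} (hψ : ContDiff ℝ 2 ψ) (hψc : HasCompactSupport ψ) :
    ∃ B : ℝ, 0 ≤ B ∧ ∀ η₁ η₂ : ℝ, η₁ ≠ 0 → η₂ ≠ 0 → η₁ + η₂ ≠ 0 →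
      |Qpsi ψ η₁ η₂| ^ 2 ≤ B * (m2 η₁ * m2 η₂ + m2 η₁ * m2 (η₁ + η₂)) := by
  set D := pd1 (pd2 ψ) with hD
  have hDc : Continuous D := continuous_pd1_pd2 hψ
  have hDs : HasCompactSupport D := hasCompactSupport_pd1 (hasCompactSupport_pd2 hψc)
  obtain ⟨r, hr⟩ := hDs.isBounded.subset_closedBall (0 : ℝ × ℝ)
  set R := max r 1 with hRdef
  have hR1 : (1:ℝ) ≤ R := le_max_right _ _
  have hyR : ∀ p : ℝ × ℝ, D p ≠ 0 → |p.2| ≤ R := by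
    intro p hp
    have hmem : p ∈ tsupport D := subset_tsupport D hp
    have : ‖p‖ ≤ r := by simpa using mem_closedBall_iff_norm.mp (hr hmem)
    calc |p.2| = ‖p.2‖ := (Real.norm_eq_abs _).symm
      _ ≤ ‖p‖ := norm_snd_le p
      _ ≤ r := this
      _ ≤ R := le_max_left _ _
  have hD2cont : Continuous fun p : ℝ × ℝ => |D p| ^ 2 := (hDc.abs.pow 2)
  have hD2supp : HasCompactSupport fun p : ℝ × ℝ => |D p| ^ 2 := by
    have : HasCompactSupport ((fun t : ℝ => |t| ^ 2) ∘ D) :=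
      hDs.comp_left (by norm_num)
    simpa [Function.comp_def] using this
  have hA : Integrable (fun p : ℝ × ℝ => |D p| ^ 2) :=
    hD2cont.integrable_of_hasCompactSupport hD2supp
  set A := ∫ p : ℝ × ℝ, |D p| ^ 2 with hAdef
  have hA0 : 0 ≤ A := integral_nonneg fun p => by positivity
  refine ⟨A * (8 * (R + 2) ^ 4), by positivity, ?_⟩
  intro η₁ η₂ h1 h2 h12
  have hΦ0 : 0 ≤ m2 η₁ * m2 η₂ + m2 η₁ * m2 (η₁ + η₂) := by
    have := m2_nonneg η₁; have := m2_nonneg η₂; have := m2_nonneg (η₁ + η₂); positivity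
  have hI0 : 0 ≤ ∫ p : ℝ × ℝ, |D p| ^ 2 * ‖KK η₁ η₂ p.2‖ ^ 2 :=
    integral_nonneg fun p => by positivity
  have hQsq : |Qpsi ψ η₁ η₂| ^ 2 = ∫ p : ℝ × ℝ, |D p| ^ 2 * ‖KK η₁ η₂ p.2‖ ^ 2 := by
    rw [Qpsi_eq, abs_of_nonneg (Real.sqrt_nonneg _), Real.sq_sqrt hI0]
  rw [hQsq]
  have hmono : (∫ p : ℝ × ℝ, |D p| ^ 2 * ‖KK η₁ η₂ p.2‖ ^ 2)
      ≤ ∫ p : ℝ × ℝ, |D p| ^ 2 * (8 * (R + 2) ^ 4 * (m2 η₁ * m2 η₂ + m2 η₁ * m2 (η₁ + η₂))) := by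
    apply integral_mono_of_nonneg
    · exact Filter.Eventually.of_forall fun p => by positivity
    · exact hA.mul_const _
    · apply Filter.Eventually.of_forall
      intro p
      rcases eq_or_ne (D p) 0 with h0 | h0
      · simp only [h0, abs_zero]
        norm_num
      · exact mul_le_mul_of_nonneg_left (KK_sq_bound hR1 h1 h2 h12 (hyR p h0)) (by positivity)
  calc (∫ p : ℝ × ℝ, |D p| ^ 2 * ‖KK η₁ η₂ p.2‖ ^ 2)
      ≤ ∫ p : ℝ × ℝ, |D p| ^ 2 * (8 * (R + 2) ^ 4 * (m2 η₁ * m2 η₂ + m2 η₁ * m2 (η₁ + η₂))) :=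
        hmono
    _ = A * (8 * (R + 2) ^ 4) * (m2 η₁ * m2 η₂ + m2 η₁ * m2 (η₁ + η₂)) := by
        rw [integral_mul_const]
        ring

lemma Qpsi_measurable {ψ : ℝ × ℝ → ℝ} (hψ : ContDiff ℝ 2 ψ) :
    Measurable fun x : ℝ × ℝ => Qpsi ψ x.1 x.2 := by
  have hDc : Continuous (pd1 (pd2 ψ)) := continuous_pd1_pd2 hψ
  have hG : Continuous fun xp : (ℝ × ℝ) × (ℝ × ℝ) =>
      |pd1 (pd2 ψ) xp.2| ^ 2 *
        ‖∫ z in (0:ℝ)..xp.2.2,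
            (∫ w in (0:ℝ)..z, Complex.exp (Complex.I * (xp.1.1 : ℂ) * (w : ℂ))) *
              Complex.exp (Complex.I * (xp.1.2 : ℂ) * (z : ℂ))‖ ^ 2 := by
    fun_prop
  have hSM : StronglyMeasurable fun x : ℝ × ℝ =>
      ∫ p : ℝ × ℝ, |pd1 (pd2 ψ) p| ^ 2 *
        ‖∫ z in (0:ℝ)..p.2,
            (∫ w in (0:ℝ)..z, Complex.exp (Complex.I * (x.1 : ℂ) * (w : ℂ))) *
              Complex.exp (Complex.I * (x.2 : ℂ) * (z : ℂ))‖ ^ 2 :=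
    hG.stronglyMeasurable.integral_prod_right'
  exact Real.continuous_sqrt.measurable.comp hSM.measurable

end QpsiBounds
section FinalAssembly

lemma ae_nonzero : ∀ᵐ x : ℝ × ℝ, x.1 ≠ 0 ∧ x.2 ≠ 0 ∧ x.1 + x.2 ≠ 0 := by
  have hvol : (volume : Measure (ℝ × ℝ)) = (volume : Measure ℝ).prod (volume : Measure ℝ) :=
    MeasureTheory.Measure.volume_eq_prod ℝ ℝ
  have h1 : (volume {x : ℝ × ℝ | x.1 = 0}) = 0 := by
    have hset : {x : ℝ × ℝ | x.1 = 0} = ({0} : Set ℝ) ×ˢ (Set.univ : Set ℝ) := by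
      ext ⟨a, b⟩; simp [Set.mem_prod, Prod.ext_iff, eq_comm]
    rw [hset, hvol, Measure.prod_prod]
    simp
  have h2 : (volume {x : ℝ × ℝ | x.2 = 0}) = 0 := by
    have hset : {x : ℝ × ℝ | x.2 = 0} = (Set.univ : Set ℝ) ×ˢ ({0} : Set ℝ) := by
      ext ⟨a, b⟩; simp [Set.mem_prod, Prod.ext_iff, eq_comm]
    rw [hset, hvol, Measure.prod_prod]
    simp
  have h3 : (volume {x : ℝ × ℝ | x.1 + x.2 = 0}) = 0 := by
    have hS : MeasurePreserving (fun z : ℝ × ℝ => (z.1, z.1 + z.2))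
        ((volume : Measure ℝ).prod (volume : Measure ℝ))
        ((volume : Measure ℝ).prod (volume : Measure ℝ)) :=
      measurePreserving_prod_add (volume : Measure ℝ) (volume : Measure ℝ)
    have hmeas : MeasurableSet {x : ℝ × ℝ | x.2 = 0} :=
      measurableSet_eq_fun measurable_snd measurable_const
    have hpre : (fun z : ℝ × ℝ => (z.1, z.1 + z.2)) ⁻¹' {x : ℝ × ℝ | x.2 = 0}
        = {x : ℝ × ℝ | x.1 + x.2 = 0} := by
      ext z; simp
    have := hS.measure_preimage hmeas.nullMeasurableSet
    rw [hpre] at this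
    rw [hvol]
    rw [this, ← hvol]
    exact h2
  have g1 : ∀ᵐ x : ℝ × ℝ, x.1 ≠ 0 := by
    rw [MeasureTheory.ae_iff]; simpa using h1
  have g2 : ∀ᵐ x : ℝ × ℝ, x.2 ≠ 0 := by
    rw [MeasureTheory.ae_iff]; simpa using h2
  have g3 : ∀ᵐ x : ℝ × ℝ, x.1 + x.2 ≠ 0 := by
    rw [MeasureTheory.ae_iff]; simpa using h3
  filter_upwards [g1, g2, g3] with x a b c
  exact ⟨a, b, c⟩

lemma Wmaj_shift1 {μ₁ μ₂ δ c : ℝ} (hδ : 0 < δ) (hc : 0 < c) {x : ℝ × ℝ} (hx : c ≤ |x.1|) :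
    Wmaj μ₁ μ₂ x ≤ c ^ (-δ) * Wmaj (μ₁ - δ) μ₂ x := by
  have hx1 : (0:ℝ) < |x.1| := lt_of_lt_of_le hc hx
  have hsplit : |x.1| ^ (1 - μ₁) = |x.1| ^ (-δ) * |x.1| ^ (1 - (μ₁ - δ)) := by
    rw [← Real.rpow_add hx1]
    congr 1
    ring
  have hle : |x.1| ^ (-δ) ≤ c ^ (-δ) :=
    Real.rpow_le_rpow_of_nonpos hc hx (neg_nonpos.mpr hδ.le)
  have heq : Wmaj μ₁ μ₂ x = |x.1| ^ (-δ) * Wmaj (μ₁ - δ) μ₂ x := by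
    unfold Wmaj
    rw [hsplit]
    ring
  rw [heq]
  exact mul_le_mul_of_nonneg_right hle (Wmaj_nonneg _ _ x)

lemma Wmaj_shift2 {μ₁ μ₂ δ c : ℝ} (hδ : 0 < δ) (hc : 0 < c) {x : ℝ × ℝ} (hx : c ≤ |x.2|) :
    Wmaj μ₁ μ₂ x ≤ c ^ (-δ) * Wmaj μ₁ (μ₂ - δ) x := by
  have hx2 : (0:ℝ) < |x.2| := lt_of_lt_of_le hc hx
  have hsplit : |x.2| ^ (1 - μ₂) = |x.2| ^ (-δ) * |x.2| ^ (1 - (μ₂ - δ)) := by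
    rw [← Real.rpow_add hx2]
    congr 1
    ring
  have hle : |x.2| ^ (-δ) ≤ c ^ (-δ) :=
    Real.rpow_le_rpow_of_nonpos hc hx (neg_nonpos.mpr hδ.le)
  have heq : Wmaj μ₁ μ₂ x = |x.2| ^ (-δ) * Wmaj μ₁ (μ₂ - δ) x := by
    unfold Wmaj
    rw [hsplit]
    ring
  rw [heq]
  exact mul_le_mul_of_nonneg_right hle (Wmaj_nonneg _ _ x)

theorem stmt13 (ψ : ℝ × ℝ → ℝ) (hψ : ContDiff ℝ 2 ψ) (hψc : HasCompactSupport ψ)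
    (lam₁ lam₂ : ℝ) (h₁ : lam₁ ∈ Set.Ioo (0:ℝ) 2) (h₂ : lam₂ ∈ Set.Ioo (0:ℝ) 2)
    (hsum : 1 < lam₁ + lam₂) :
    Integrable (fun x : ℝ × ℝ =>
      |Qpsi ψ x.1 x.2| ^ 2 * |x.1| ^ (1 - lam₁) * |x.2| ^ (1 - lam₂)) ∧
    ∃ ε : ℝ, 0 < ε ∧ ∃ C : ℝ, 0 < C ∧ ∀ c : ℝ, 1 ≤ c →
      (∫ x in {x : ℝ × ℝ | c ≤ |x.1|},
          |Qpsi ψ x.1 x.2| ^ 2 * |x.1| ^ (1 - lam₁) * |x.2| ^ (1 - lam₂))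
        ≤ C * c ^ (-ε) ∧
      (∫ x in {x : ℝ × ℝ | c ≤ |x.2|},
          |Qpsi ψ x.1 x.2| ^ 2 * |x.1| ^ (1 - lam₁) * |x.2| ^ (1 - lam₂))
        ≤ C * c ^ (-ε) := by
  obtain ⟨B, hB0, hB⟩ := Qpsi_sq_bound hψ hψc
  set f₀ : ℝ × ℝ → ℝ := fun x =>
    |Qpsi ψ x.1 x.2| ^ 2 * |x.1| ^ (1 - lam₁) * |x.2| ^ (1 - lam₂) with hf₀def
  have f₀nn : ∀ x, 0 ≤ f₀ x := by
    intro x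
    have h1 : (0:ℝ) ≤ |Qpsi ψ x.1 x.2| ^ 2 := by positivity
    have h2 : (0:ℝ) ≤ |x.1| ^ (1 - lam₁) := Real.rpow_nonneg (abs_nonneg _) _
    have h3 : (0:ℝ) ≤ |x.2| ^ (1 - lam₂) := Real.rpow_nonneg (abs_nonneg _) _
    positivity
  have hglobal : ∀ᵐ x : ℝ × ℝ, f₀ x ≤ B * Wmaj lam₁ lam₂ x := by
    filter_upwards [ae_nonzero] with x hx
    obtain ⟨hx1, hx2, hx12⟩ := hx
    have hq := hB x.1 x.2 hx1 hx2 hx12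
    have h2 : (0:ℝ) ≤ |x.1| ^ (1 - lam₁) := Real.rpow_nonneg (abs_nonneg _) _
    have h3 : (0:ℝ) ≤ |x.2| ^ (1 - lam₂) := Real.rpow_nonneg (abs_nonneg _) _
    have heq : B * Wmaj lam₁ lam₂ x =
        B * (m2 x.1 * m2 x.2 + m2 x.1 * m2 (x.1 + x.2)) * |x.1| ^ (1 - lam₁) *
          |x.2| ^ (1 - lam₂) := by
      unfold Wmaj; ring
    rw [heq]
    calc f₀ x = |Qpsi ψ x.1 x.2| ^ 2 * |x.1| ^ (1 - lam₁) * |x.2| ^ (1 - lam₂) := rfl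
      _ ≤ B * (m2 x.1 * m2 x.2 + m2 x.1 * m2 (x.1 + x.2)) * |x.1| ^ (1 - lam₁) *
            |x.2| ^ (1 - lam₂) := by
          apply mul_le_mul_of_nonneg_right (mul_le_mul_of_nonneg_right hq h2) h3
  have hmeasf : AEStronglyMeasurable f₀ (volume : Measure (ℝ × ℝ)) := by
    apply Measurable.aestronglyMeasurable
    apply Measurable.mul
    apply Measurable.mul
    · exact ((Qpsi_measurable hψ).abs.pow_const 2)
    · fun_prop
    · fun_prop
  have hWint := Wmaj_integrable h₁.1 h₁.2 h₂.1 h₂.2 hsum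
  have hInt : Integrable f₀ := by
    refine Integrable.mono' (hWint.const_mul B) hmeasf ?_
    filter_upwards [hglobal] with x hx
    rw [Real.norm_eq_abs, abs_of_nonneg (f₀nn x)]
    exact hx
  refine ⟨hInt, ?_⟩
  -- choose ε = δ
  have hminpos : 0 < min (min lam₁ lam₂) (lam₁ + lam₂ - 1) :=
    lt_min (lt_min h₁.1 h₂.1) (by linarith)
  set δ : ℝ := min (min lam₁ lam₂) (lam₁ + lam₂ - 1) / 2 with hδdef
  have hδ : 0 < δ := by positivity
  have hδ1 : δ < lam₁ := by
    have ha := min_le_left (min lam₁ lam₂) (lam₁ + lam₂ - 1)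
    have hb := min_le_left lam₁ lam₂
    have := h₁.1
    simp only [hδdef]
    linarith
  have hδ2 : δ < lam₂ := by
    have ha := min_le_left (min lam₁ lam₂) (lam₁ + lam₂ - 1)
    have hb := min_le_right lam₁ lam₂
    have := h₂.1
    simp only [hδdef]
    linarith
  have hδs : δ < lam₁ + lam₂ - 1 := by
    have ha := min_le_right (min lam₁ lam₂) (lam₁ + lam₂ - 1)
    simp only [hδdef]
    linarith
  have hW1 : Integrable (Wmaj (lam₁ - δ) lam₂) :=
    Wmaj_integrable (by linarith) (by linarith [h₁.2]) h₂.1 h₂.2 (by linarith)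
  have hW2 : Integrable (Wmaj lam₁ (lam₂ - δ)) :=
    Wmaj_integrable h₁.1 h₁.2 (by linarith) (by linarith [h₂.2]) (by linarith)
  set I₁ : ℝ := ∫ x, Wmaj (lam₁ - δ) lam₂ x with hI₁def
  set I₂ : ℝ := ∫ x, Wmaj lam₁ (lam₂ - δ) x with hI₂def
  have hI₁0 : 0 ≤ I₁ := integral_nonneg (Wmaj_nonneg _ _)
  have hI₂0 : 0 ≤ I₂ := integral_nonneg (Wmaj_nonneg _ _)
  refine ⟨δ, hδ, B * (I₁ + I₂) + 1, by positivity, ?_⟩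
  intro c hc
  have hcpos : (0:ℝ) < c := lt_of_lt_of_le one_pos hc
  have hcd : (0:ℝ) ≤ c ^ (-δ) := Real.rpow_nonneg hcpos.le _
  constructor
  · -- tail in x.1
    have hSm : MeasurableSet {x : ℝ × ℝ | c ≤ |x.1|} :=
      measurableSet_le measurable_const measurable_fst.abs
    have hg : Integrable (fun x : ℝ × ℝ => c ^ (-δ) * (B * Wmaj (lam₁ - δ) lam₂ x)) :=
      (hW1.const_mul B).const_mul (c ^ (-δ))
    have h1 : (∫ x in {x : ℝ × ℝ | c ≤ |x.1|}, f₀ x)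
        ≤ ∫ x in {x : ℝ × ℝ | c ≤ |x.1|}, c ^ (-δ) * (B * Wmaj (lam₁ - δ) lam₂ x) := by
      apply integral_mono_ae hInt.restrict hg.restrict
      filter_upwards [ae_restrict_of_ae hglobal, ae_restrict_mem hSm] with x hx hxS
      calc f₀ x ≤ B * Wmaj lam₁ lam₂ x := hx
        _ ≤ B * (c ^ (-δ) * Wmaj (lam₁ - δ) lam₂ x) :=
            mul_le_mul_of_nonneg_left (Wmaj_shift1 hδ hcpos hxS) hB0
        _ = c ^ (-δ) * (B * Wmaj (lam₁ - δ) lam₂ x) := by ring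
    have h2 : (∫ x in {x : ℝ × ℝ | c ≤ |x.1|}, c ^ (-δ) * (B * Wmaj (lam₁ - δ) lam₂ x))
        ≤ ∫ x : ℝ × ℝ, c ^ (-δ) * (B * Wmaj (lam₁ - δ) lam₂ x) := by
      apply setIntegral_le_integral hg
      filter_upwards with x
      have := Wmaj_nonneg (lam₁ - δ) lam₂ x
      positivity
    have h3 : (∫ x : ℝ × ℝ, c ^ (-δ) * (B * Wmaj (lam₁ - δ) lam₂ x))
        = c ^ (-δ) * (B * I₁) := by
      rw [integral_const_mul, integral_const_mul]
    have h4 : c ^ (-δ) * (B * I₁) ≤ (B * (I₁ + I₂) + 1) * c ^ (-δ) := by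
      rw [mul_comm (B * (I₁ + I₂) + 1) (c ^ (-δ))]
      apply mul_le_mul_of_nonneg_left ?_ hcd
      have : 0 ≤ B * I₂ := mul_nonneg hB0 hI₂0
      nlinarith
    calc (∫ x in {x : ℝ × ℝ | c ≤ |x.1|}, f₀ x)
        ≤ ∫ x in {x : ℝ × ℝ | c ≤ |x.1|}, c ^ (-δ) * (B * Wmaj (lam₁ - δ) lam₂ x) := h1
      _ ≤ ∫ x : ℝ × ℝ, c ^ (-δ) * (B * Wmaj (lam₁ - δ) lam₂ x) := h2
      _ = c ^ (-δ) * (B * I₁) := h3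
      _ ≤ (B * (I₁ + I₂) + 1) * c ^ (-δ) := h4
  · -- tail in x.2
    have hSm : MeasurableSet {x : ℝ × ℝ | c ≤ |x.2|} :=
      measurableSet_le measurable_const measurable_snd.abs
    have hg : Integrable (fun x : ℝ × ℝ => c ^ (-δ) * (B * Wmaj lam₁ (lam₂ - δ) x)) :=
      (hW2.const_mul B).const_mul (c ^ (-δ))
    have h1 : (∫ x in {x : ℝ × ℝ | c ≤ |x.2|}, f₀ x)
        ≤ ∫ x in {x : ℝ × ℝ | c ≤ |x.2|}, c ^ (-δ) * (B * Wmaj lam₁ (lam₂ - δ) x) := by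
      apply integral_mono_ae hInt.restrict hg.restrict
      filter_upwards [ae_restrict_of_ae hglobal, ae_restrict_mem hSm] with x hx hxS
      calc f₀ x ≤ B * Wmaj lam₁ lam₂ x := hx
        _ ≤ B * (c ^ (-δ) * Wmaj lam₁ (lam₂ - δ) x) :=
            mul_le_mul_of_nonneg_left (Wmaj_shift2 hδ hcpos hxS) hB0
        _ = c ^ (-δ) * (B * Wmaj lam₁ (lam₂ - δ) x) := by ring
    have h2 : (∫ x in {x : ℝ × ℝ | c ≤ |x.2|}, c ^ (-δ) * (B * Wmaj lam₁ (lam₂ - δ) x))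
        ≤ ∫ x : ℝ × ℝ, c ^ (-δ) * (B * Wmaj lam₁ (lam₂ - δ) x) := by
      apply setIntegral_le_integral hg
      filter_upwards with x
      have := Wmaj_nonneg lam₁ (lam₂ - δ) x
      positivity
    have h3 : (∫ x : ℝ × ℝ, c ^ (-δ) * (B * Wmaj lam₁ (lam₂ - δ) x))
        = c ^ (-δ) * (B * I₂) := by
      rw [integral_const_mul, integral_const_mul]
    have h4 : c ^ (-δ) * (B * I₂) ≤ (B * (I₁ + I₂) + 1) * c ^ (-δ) := by
      rw [mul_comm (B * (I₁ + I₂) + 1) (c ^ (-δ))]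
      apply mul_le_mul_of_nonneg_left ?_ hcd
      have : 0 ≤ B * I₁ := mul_nonneg hB0 hI₁0
      nlinarith
    calc (∫ x in {x : ℝ × ℝ | c ≤ |x.2|}, f₀ x)
        ≤ ∫ x in {x : ℝ × ℝ | c ≤ |x.2|}, c ^ (-δ) * (B * Wmaj lam₁ (lam₂ - δ) x) := h1
      _ ≤ ∫ x : ℝ × ℝ, c ^ (-δ) * (B * Wmaj lam₁ (lam₂ - δ) x) := h2
      _ = c ^ (-δ) * (B * I₂) := h3
      _ ≤ (B * (I₁ + I₂) + 1) * c ^ (-δ) := h4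

end FinalAssembly
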